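/- Fix reals β' > 0, γ' ≥ 0, γ > 0, and define S_n = Σ_{k=0}^{n} (β'/(β'+γ))^k · Γ(k+1+γ'/β')/(k!·(n-k)!) · (γ/(β'+γ))^{n-k}. Then for all m ≤ n, S_m ≤ ((β'+γ)/β')^{n-m} · S_n. -/
import Mathlib


theorem stmt_9 (β' γ' γ : ℝ) (hβ' : 0 < β') (hγ' : 0 ≤ γ') (hγ : 0 < γ)
    (S : ℕ → ℝ)
    (hS : ∀ n : ℕ, S n = ∑ k ∈ Finset.range (n + 1),
      (β' / (β' + γ)) ^ k * Real.Gamma (k + 1 + γ' / β')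
        / (k.factorial * (n - k).factorial) * (γ / (β' + γ)) ^ (n - k)) :
    ∀ m n : ℕ, m ≤ n → S m ≤ ((β' + γ) / β') ^ (n - m) * S n := by
  have hpg : 0 < β' + γ := by linarith
  set c := γ' / β' with hc
  have hc0 : 0 ≤ c := div_nonneg hγ' hβ'.le
  set p := β' / (β' + γ) with hp
  set q := γ / (β' + γ) with hq
  have hp0 : 0 < p := div_pos hβ' hpg
  have hq0 : 0 < q := div_pos hγ hpg
  have hΓpos : ∀ k : ℕ, 0 < Real.Gamma ((k : ℝ) + 1 + c) := by
    intro k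
    apply Real.Gamma_pos_of_pos
    positivity
  have hrec : ∀ k : ℕ, ((k : ℝ) + 1) * Real.Gamma ((k : ℝ) + 1 + c) ≤
      Real.Gamma ((k : ℝ) + 1 + 1 + c) := by
    intro k
    have hx : (0:ℝ) < (k:ℝ) + 1 + c := by positivity
    have h1 : Real.Gamma ((k:ℝ) + 1 + 1 + c) = ((k:ℝ) + 1 + c) * Real.Gamma ((k:ℝ) + 1 + c) := by
      rw [show ((k:ℝ) + 1 + 1 + c) = ((k:ℝ) + 1 + c) + 1 by ring]
      exact Real.Gamma_add_one hx.ne'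
    rw [h1]
    nlinarith [hΓpos k, mul_nonneg hc0 (hΓpos k).le]
  have key : ∀ n : ℕ, p * S n ≤ S (n + 1) := by
    intro n
    rw [hS n, hS (n + 1), Finset.mul_sum, Finset.sum_range_succ' _ (n + 1)]
    refine le_add_of_le_of_nonneg (Finset.sum_le_sum ?_) ?_
    · intro k hk
      rw [Nat.succ_sub_succ, Nat.factorial_succ]
      push_cast
      rw [show p * (p ^ k * Real.Gamma ((k:ℝ) + 1 + c) / (↑k.factorial * ↑(n - k).factorial) * q ^ (n - k))
            = (p ^ (k + 1) * Real.Gamma ((k:ℝ) + 1 + c) * q ^ (n - k)) / (↑k.factorial * ↑(n - k).factorial) from by ring,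
          show p ^ (k + 1) * Real.Gamma ((k:ℝ) + 1 + 1 + c) / (((k:ℝ) + 1) * ↑k.factorial * ↑(n - k).factorial) * q ^ (n - k)
            = (p ^ (k + 1) * Real.Gamma ((k:ℝ) + 1 + 1 + c) * q ^ (n - k)) / (((k:ℝ) + 1) * ↑k.factorial * ↑(n - k).factorial) from by ring]
      rw [div_le_div_iff₀ (by positivity) (by positivity)]
      nlinarith [mul_le_mul_of_nonneg_left (hrec k)
        (show (0:ℝ) ≤ p ^ (k + 1) * q ^ (n - k) * k.factorial * (n - k).factorial by positivity)]
    · have := hΓpos 0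
      push_cast at this
      positivity
  have hCp : (β' + γ) / β' * p = 1 := by
    rw [hp]; field_simp
  have hC0 : 0 < (β' + γ) / β' := div_pos hpg hβ'
  have step : ∀ n : ℕ, S n ≤ (β' + γ) / β' * S (n + 1) := by
    intro n
    calc S n = (β' + γ) / β' * (p * S n) := by rw [← mul_assoc, hCp, one_mul]
      _ ≤ (β' + γ) / β' * S (n + 1) := mul_le_mul_of_nonneg_left (key n) hC0.le
  intro m n hmn
  obtain ⟨d, rfl⟩ := Nat.exists_eq_add_of_le hmn
  rw [Nat.add_sub_cancel_left]
  induction d with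
  | zero => simp
  | succ d ih =>
    calc S m ≤ ((β' + γ) / β') ^ d * S (m + d) := ih (by omega)
      _ ≤ ((β' + γ) / β') ^ d * ((β' + γ) / β' * S (m + d + 1)) := by
          exact mul_le_mul_of_nonneg_left (step (m + d)) (by positivity)
      _ = ((β' + γ) / β') ^ (d + 1) * S (m + (d + 1)) := by
          rw [pow_succ, ← add_assoc]; ring
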